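/- Let b > 1, m > b − 1, and let F be a differentiable cumulative distribution function on [0, ℓ̄] with continuous density f = F′ > 0, and define Ψ(ℓ; π) = ((1+m−b)/(1−F(ℓ)))·(π/(1−π)) − (b−1)·F(ℓ)/(1−F(ℓ)) for ℓ with F(ℓ) < 1 and π ∈ (0,1). Fix π₁ with 0 < π₁ < (b−1)/m, let I ⊆ ((b−1)/m, 1) be an open interval, and suppose ℓ̂₁, ℓ̂₂ : I → (0, ℓ̄) are differentiable functions with F(ℓ̂₁(t)) < 1 and F(ℓ̂₂(t)) < 1 satisfying, for all t ∈ I, the equilibrium system ℓ̂₁(t) = Ψ(ℓ̂₂(t); π₁) and ℓ̂₂(t) = Ψ(ℓ̂₁(t); t). Then ℓ̂₁′(t) < 0 and ℓ̂₂′(t) > 0 for all t ∈ I; that is, an increase in the optimist's belief π₂ = t strictly lowers the pessimist's equilibrium threshold ℓ̂₁ and strictly raises the optimist's equilibrium threshold ℓ̂₂. -/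

import Mathlib

/-- The reduced-form best-response function. -/
noncomputable def Psi (b m : ℝ) (F : ℝ → ℝ) (l q : ℝ) : ℝ :=
  (1 + m - b) / (1 - F l) * (q / (1 - q)) - (b - 1) * (F l / (1 - F l))

/-- Derivative of `u ↦ A/(1-u)*r - B*(u/(1-u))`. -/
lemma aux_g (A B r : ℝ) {u : ℝ} (hu : (1:ℝ) - u ≠ 0) :
    HasDerivAt (fun u : ℝ => A / (1 - u) * r - B * (u / (1 - u)))
      ((A * r - B) / (1 - u) ^ 2) u := by
  have h1 : HasDerivAt (fun u : ℝ => 1 - u) (-1) u := (hasDerivAt_id u).const_sub 1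
  have h2 := (hasDerivAt_const u A).div h1 hu
  have h3 := (hasDerivAt_id u).div h1 hu
  have h := (h2.mul_const r).sub (h3.const_mul B)
  refine h.congr_deriv ?_
  field_simp
  simp only [id]
  ring

/-- with asymmetric commonly known beliefs `π₁ < (b−1)/m < π₂`, if the
interior equilibrium thresholds `ℓ̂₁, ℓ̂₂`, viewed as differentiable functions of
`π₂ = t` on an open interval `I = (a, c) ⊆ ((b−1)/m, 1)`, solve the system
`ℓ̂₁(t) = Ψ(ℓ̂₂(t); π₁)` and `ℓ̂₂(t) = Ψ(ℓ̂₁(t); t)`, then `ℓ̂₁′(t) < 0 < ℓ̂₂′(t)` on `I`: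
an increase in the optimist's belief strictly lowers the pessimist's equilibrium
threshold and strictly raises the optimist's equilibrium threshold. -/
theorem stmt17 (b m lbar q₁ a c : ℝ) (F f l₁ l₂ l₁' l₂' : ℝ → ℝ)
    (hb : 1 < b) (hm : b - 1 < m) (hlbar : 0 < lbar)
    (hF : ∀ x ∈ Set.Icc 0 lbar, HasDerivAt F (f x) x)
    (hf : ContinuousOn f (Set.Icc 0 lbar))
    (hfpos : ∀ x ∈ Set.Icc 0 lbar, 0 < f x)
    (hq₁ : q₁ ∈ Set.Ioo 0 ((b - 1) / m))
    (hI : Set.Ioo a c ⊆ Set.Ioo ((b - 1) / m) 1)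
    (hd₁ : ∀ t ∈ Set.Ioo a c, HasDerivAt l₁ (l₁' t) t)
    (hd₂ : ∀ t ∈ Set.Ioo a c, HasDerivAt l₂ (l₂' t) t)
    (hr₁ : ∀ t ∈ Set.Ioo a c, l₁ t ∈ Set.Ioo 0 lbar ∧ F (l₁ t) < 1)
    (hr₂ : ∀ t ∈ Set.Ioo a c, l₂ t ∈ Set.Ioo 0 lbar ∧ F (l₂ t) < 1)
    (heq₁ : ∀ t ∈ Set.Ioo a c, l₁ t = Psi b m F (l₂ t) q₁)
    (heq₂ : ∀ t ∈ Set.Ioo a c, l₂ t = Psi b m F (l₁ t) t) :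
    ∀ t ∈ Set.Ioo a c, l₁' t < 0 ∧ 0 < l₂' t := by
  intro t ht
  obtain ⟨ht1, ht2⟩ := hI ht
  obtain ⟨hq0, hqlt⟩ := hq₁
  have hm0 : (0:ℝ) < m := by linarith
  have hq1lt1 : q₁ < 1 := lt_of_lt_of_le hqlt (le_of_lt ((div_lt_one hm0).mpr hm))
  have hQ : (0:ℝ) < 1 - q₁ := by linarith
  have hS : (0:ℝ) < 1 - t := by linarith
  have hW₁ : (0:ℝ) < 1 - F (l₁ t) := by linarith [(hr₁ t ht).2]
  have hW₂ : (0:ℝ) < 1 - F (l₂ t) := by linarith [(hr₂ t ht).2]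
  have hl₁Icc : l₁ t ∈ Set.Icc 0 lbar :=
    ⟨le_of_lt (hr₁ t ht).1.1, le_of_lt (hr₁ t ht).1.2⟩
  have hl₂Icc : l₂ t ∈ Set.Icc 0 lbar :=
    ⟨le_of_lt (hr₂ t ht).1.1, le_of_lt (hr₂ t ht).1.2⟩
  have hf₁ : 0 < f (l₁ t) := hfpos _ hl₁Icc
  have hf₂ : 0 < f (l₂ t) := hfpos _ hl₂Icc
  have hFl₁ : HasDerivAt (fun s => F (l₁ s)) (f (l₁ t) * l₁' t) t :=
    (hF _ hl₁Icc).comp t (hd₁ t ht)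
  have hFl₂ : HasDerivAt (fun s => F (l₂ s)) (f (l₂ t) * l₂' t) t :=
    (hF _ hl₂Icc).comp t (hd₂ t ht)
  have hnhds : Set.Ioo a c ∈ nhds t := isOpen_Ioo.mem_nhds ht
  -- Equation 1: derivative of t ↦ Ψ(l₂ t; q₁)
  have hG1 : HasDerivAt (fun s => Psi b m F (l₂ s) q₁)
      (((1 + m - b) * (q₁ / (1 - q₁)) - (b - 1)) / (1 - F (l₂ t)) ^ 2
        * (f (l₂ t) * l₂' t)) t := by
    have hg := aux_g (1 + m - b) (b - 1) (q₁ / (1 - q₁)) hW₂.ne'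
    have := hg.comp t hFl₂
    simpa [Psi, Function.comp_def] using this
  have hev₁ : l₁ =ᶠ[nhds t] fun s => Psi b m F (l₂ s) q₁ := by
    filter_upwards [hnhds] with s hs using heq₁ s hs
  have hE1 : l₁' t = ((1 + m - b) * (q₁ / (1 - q₁)) - (b - 1)) / (1 - F (l₂ t)) ^ 2
      * (f (l₂ t) * l₂' t) :=
    (hd₁ t ht).unique (hG1.congr_of_eventuallyEq hev₁)
  -- Equation 2: derivative of t ↦ Ψ(l₁ t; t)
  have h1v : HasDerivAt (fun s => 1 - F (l₁ s)) (-(f (l₁ t) * l₁' t)) t :=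
    hFl₁.const_sub 1
  have hA := (hasDerivAt_const t (1 + m - b)).div h1v hW₁.ne'
  have hR := (hasDerivAt_id t).div ((hasDerivAt_id t).const_sub 1) hS.ne'
  have hVV := hFl₁.div h1v hW₁.ne'
  have hG2 := (hA.mul hR).sub (hVV.const_mul (b - 1))
  have hev₂ : l₂ =ᶠ[nhds t] fun s => Psi b m F (l₁ s) s := by
    filter_upwards [hnhds] with s hs using heq₂ s hs
  have hE2 := (hd₂ t ht).unique ((by simp only [Pi.div_def, Pi.mul_def, Pi.sub_def, id] at hG2; simpa [Psi] using hG2 :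
      HasDerivAt (fun s => Psi b m F (l₁ s) s) _ t).congr_of_eventuallyEq hev₂)
  -- abbreviations
  set x := l₁' t with hx
  set y := l₂' t with hy
  set u1 := F (l₁ t) with hu1
  set u2 := F (l₂ t) with hu2
  set v1 := f (l₁ t) with hv1
  set v2 := f (l₂ t) with hv2
  -- polynomial forms of the two equations
  have hE1' : x * (1 - u2) ^ 2 * (1 - q₁) = (q₁ * m - (b - 1)) * v2 * y := by
    rw [hE1]
    field_simp
    ring
  have hE2' : y * (1 - u1) ^ 2 * (1 - t) ^ 2
      = v1 * x * (1 - t) * (t * m - (b - 1)) + (1 + m - b) * (1 - u1) := by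
    rw [hE2]
    field_simp
    ring
  have hD1 : q₁ * m - (b - 1) < 0 := by
    have := (lt_div_iff₀ hm0).mp hqlt
    linarith
  have hC2 : 0 < t * m - (b - 1) := by
    have := (div_lt_iff₀ hm0).mp ht1
    linarith
  have hAm : (0:ℝ) < 1 + m - b := by linarith
  -- solve for y
  have hkey : y * ((1 - u1) ^ 2 * (1 - t) ^ 2 * ((1 - u2) ^ 2 * (1 - q₁))
        - v1 * v2 * (1 - t) * (t * m - (b - 1)) * (q₁ * m - (b - 1)))
      = (1 + m - b) * (1 - u1) * ((1 - u2) ^ 2 * (1 - q₁)) := by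
    linear_combination ((1 - u2) ^ 2 * (1 - q₁)) * hE2'
      + (v1 * (1 - t) * (t * m - (b - 1))) * hE1'
  have hKpos : 0 < (1 - u1) ^ 2 * (1 - t) ^ 2 * ((1 - u2) ^ 2 * (1 - q₁))
      - v1 * v2 * (1 - t) * (t * m - (b - 1)) * (q₁ * m - (b - 1)) := by
    have h1 : 0 < (1 - u1) ^ 2 * (1 - t) ^ 2 * ((1 - u2) ^ 2 * (1 - q₁)) := by positivity
    have h2 : v1 * v2 * (1 - t) * (t * m - (b - 1)) * (q₁ * m - (b - 1)) < 0 := by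
      apply mul_neg_of_pos_of_neg _ hD1
      positivity
    linarith
  have hy0 : 0 < y := by
    have hrhs : 0 < (1 + m - b) * (1 - u1) * ((1 - u2) ^ 2 * (1 - q₁)) := by positivity
    by_contra h
    push_neg at h
    have h2 := mul_nonpos_of_nonpos_of_nonneg h hKpos.le
    linarith [hkey, h2, hrhs]
  refine ⟨?_, hy0⟩
  have hx0 : x * ((1 - u2) ^ 2 * (1 - q₁)) < 0 := by
    have : (q₁ * m - (b - 1)) * v2 * y < 0 := by
      apply mul_neg_of_neg_of_pos _ hy0
      exact mul_neg_of_neg_of_pos hD1 hf₂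
    rw [show x * ((1 - u2) ^ 2 * (1 - q₁)) = x * (1 - u2) ^ 2 * (1 - q₁) from by ring,
      hE1']
    exact this
  have hpos : 0 < (1 - u2) ^ 2 * (1 - q₁) := by positivity
  by_contra h
  push_neg at h
  have h2 := mul_nonneg h hpos.le
  linarith [hx0, h2]
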